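/- Let S be a finite (nonempty) set and c ∈ (0,1). The operator F mapping a pseudometric d on S to F(d)(s_i,s_j) = (1−c)|R^π_{s_i} − R^π_{s_j}| + c·W₁(d)(P^π_{s_i}, P^π_{s_j}) is a contraction with Lipschitz constant c with respect to the sup-norm on the space of bounded pseudometrics on S × S, and hence has a unique fixed point. -/
import Mathlib


open Finset Matrix

/-- Aggregated (on-policy) reward: `Rπ s = ∑ a, π(a|s) R(s,a)`. -/
noncomputable def Rpi {S A : Type*} [Fintype A]
    (π : S → A → ℝ) (R : S → A → ℝ) (s : S) : ℝ :=
  ∑ a, π s a * R s a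

/-- Aggregated (on-policy) transition kernel: `Pπ(s'|s) = ∑ a, π(a|s) P(s'|s,a)`. -/
noncomputable def Ppi {S A : Type*} [Fintype A]
    (π : S → A → ℝ) (P : S → A → S → ℝ) (s s' : S) : ℝ :=
  ∑ a, π s a * P s a s'

/-- Value function of a finite MDP under a stationary policy, written explicitly as
`V^π_γ(s) = ∑_{t≥0} γ^t · (Pπ^t Rπ)(s)`, i.e. the expected discounted sum of rewards. -/
noncomputable def Vval {S : Type*} [Fintype S] [DecidableEq S]
    (Pm : Matrix S S ℝ) (Rv : S → ℝ) (γ : ℝ) (s : S) : ℝ :=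
  ∑' t : ℕ, γ ^ t * ((Pm ^ t) *ᵥ Rv) s

/-- A coupling of two probability vectors `μ`, `ν` on a finite set. -/
def IsCoupling {S : Type*} [Fintype S] (μ ν : S → ℝ) (l : S → S → ℝ) : Prop :=
  (∀ x y, 0 ≤ l x y) ∧ (∀ x, ∑ y, l x y = μ x) ∧ (∀ y, ∑ x, l x y = ν y)

/-- 1-Wasserstein (optimal transport) distance between probability vectors on a
finite set, with ground cost `d`. -/
noncomputable def W1 {S : Type*} [Fintype S] (d : S → S → ℝ) (μ ν : S → ℝ) : ℝ :=
  sInf {c : ℝ | ∃ l : S → S → ℝ, IsCoupling μ ν l ∧ c = ∑ x, ∑ y, l x y * d x y}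

/-- A pseudometric on `S` (as a real-valued function of two variables). -/
def IsPseudometric {S : Type*} (d : S → S → ℝ) : Prop :=
  (∀ x, d x x = 0) ∧ (∀ x y, d x y = d y x) ∧ (∀ x y z, d x z ≤ d x y + d y z)

/-- The operator on pseudometrics whose (least) fixed point is the `c`-weighted
on-policy bisimulation metric:
`F(d)(sᵢ,sⱼ) = (1-c)|R^π_{sᵢ} - R^π_{sⱼ}| + c · W₁(d)(P^π_{sᵢ}, P^π_{sⱼ})`. -/
noncomputable def bisimOp {S A : Type*} [Fintype S] [Fintype A]
    (π : S → A → ℝ) (R : S → A → ℝ) (P : S → A → S → ℝ) (c : ℝ)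
    (d : S → S → ℝ) (si sj : S) : ℝ :=
  (1 - c) * |Rpi π R si - Rpi π R sj| + c * W1 d (Ppi π P si) (Ppi π P sj)

section Helpers
variable {S : Type*} [Fintype S]

lemma exists_abs_bound (d : S → S → ℝ) : ∃ M, ∀ x y, |d x y| ≤ M := by
  cases isEmpty_or_nonempty S
  · exact ⟨0, fun x => (IsEmpty.false x).elim⟩
  · obtain ⟨M, hM⟩ := (Set.finite_range (fun p : S × S => |d p.1 p.2|)).bddAbove
    exact ⟨M, fun x y => hM ⟨(x, y), rfl⟩⟩

lemma w1set_nonempty (d : S → S → ℝ) {μ ν : S → ℝ}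
    (hμ0 : ∀ x, 0 ≤ μ x) (hμ1 : ∑ x, μ x = 1)
    (hν0 : ∀ x, 0 ≤ ν x) (hν1 : ∑ x, ν x = 1) :
    {c : ℝ | ∃ l : S → S → ℝ, IsCoupling μ ν l ∧ c = ∑ x, ∑ y, l x y * d x y}.Nonempty := by
  refine ⟨_, fun x y => μ x * ν y, ⟨fun x y => mul_nonneg (hμ0 x) (hν0 y), ?_, ?_⟩, rfl⟩
  · intro x; rw [← Finset.mul_sum, hν1, mul_one]
  · intro y; rw [← Finset.sum_mul, hμ1, one_mul]

lemma coupling_total {μ ν : S → ℝ} {l : S → S → ℝ} (hl : IsCoupling μ ν l)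
    (hμ1 : ∑ x, μ x = 1) : ∑ x, ∑ y, l x y = 1 := by
  simp only [hl.2.1]; exact hμ1

lemma w1set_bddBelow (d : S → S → ℝ) {μ ν : S → ℝ} {M : ℝ} (hM : ∀ x y, |d x y| ≤ M)
    (hμ1 : ∑ x, μ x = 1) :
    -M ∈ lowerBounds {c : ℝ | ∃ l : S → S → ℝ, IsCoupling μ ν l ∧ c = ∑ x, ∑ y, l x y * d x y} := by
  rintro c ⟨l, hl, rfl⟩
  have htot := coupling_total hl hμ1
  have : ∑ x, ∑ y, l x y * (-M) ≤ ∑ x, ∑ y, l x y * d x y := by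
    refine Finset.sum_le_sum fun x _ => Finset.sum_le_sum fun y _ => ?_
    exact mul_le_mul_of_nonneg_left ((abs_le.mp (hM x y)).1) (hl.1 x y)
  calc -M = (∑ x, ∑ y, l x y) * (-M) := by rw [htot, one_mul]
    _ = ∑ x, ∑ y, l x y * (-M) := by simp [Finset.sum_mul]
    _ ≤ _ := this

lemma w1_le_add (d d' : S → S → ℝ) {μ ν : S → ℝ} {K : ℝ}
    (hμ0 : ∀ x, 0 ≤ μ x) (hμ1 : ∑ x, μ x = 1)
    (hν0 : ∀ x, 0 ≤ ν x) (hν1 : ∑ x, ν x = 1)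
    (hK : ∀ x y, d' x y ≤ d x y + K) :
    W1 d' μ ν ≤ W1 d μ ν + K := by
  obtain ⟨M', hM'⟩ := exists_abs_bound d'
  have hbb' := w1set_bddBelow d' hM' hμ1 (ν := ν)
  have hne := w1set_nonempty d hμ0 hμ1 hν0 hν1
  have h : ∀ r ∈ {c : ℝ | ∃ l : S → S → ℝ, IsCoupling μ ν l ∧ c = ∑ x, ∑ y, l x y * d x y},
      W1 d' μ ν - K ≤ r := by
    rintro r ⟨l, hl, rfl⟩
    have hmem : (∑ x, ∑ y, l x y * d' x y) ∈
        {c : ℝ | ∃ l : S → S → ℝ, IsCoupling μ ν l ∧ c = ∑ x, ∑ y, l x y * d' x y} :=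
      ⟨l, hl, rfl⟩
    have h1 : W1 d' μ ν ≤ ∑ x, ∑ y, l x y * d' x y := csInf_le ⟨-M', hbb'⟩ hmem
    have h2 : ∑ x, ∑ y, l x y * d' x y ≤ (∑ x, ∑ y, l x y * d x y) + K := by
      have htot := coupling_total hl hμ1
      have : ∑ x, ∑ y, l x y * d' x y ≤ ∑ x, ∑ y, (l x y * d x y + l x y * K) := by
        refine Finset.sum_le_sum fun x _ => Finset.sum_le_sum fun y _ => ?_
        have := mul_le_mul_of_nonneg_left (hK x y) (hl.1 x y)
        rwa [mul_add] at this
      calc ∑ x, ∑ y, l x y * d' x y ≤ ∑ x, ∑ y, (l x y * d x y + l x y * K) := this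
        _ = (∑ x, ∑ y, l x y * d x y) + (∑ x, ∑ y, l x y) * K := by
            simp [Finset.sum_add_distrib, Finset.sum_mul]
        _ = (∑ x, ∑ y, l x y * d x y) + K := by rw [htot, one_mul]
    linarith
  have := le_csInf hne h
  have hW : W1 d μ ν = sInf {c : ℝ | ∃ l : S → S → ℝ, IsCoupling μ ν l ∧
      c = ∑ x, ∑ y, l x y * d x y} := rfl
  linarith [this]

lemma w1_self (d : S → S → ℝ) {μ : S → ℝ}
    (hd0 : ∀ x, d x x = 0) (hdnn : ∀ x y, 0 ≤ d x y)
    (hμ0 : ∀ x, 0 ≤ μ x) (hμ1 : ∑ x, μ x = 1) :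
    W1 d μ μ = 0 := by
  classical
  obtain ⟨M, hM⟩ := exists_abs_bound d
  have hbb := w1set_bddBelow d hM hμ1 (ν := μ)
  have hne := w1set_nonempty d hμ0 hμ1 hμ0 hμ1
  refine le_antisymm ?_ ?_
  · have hmem : (0 : ℝ) ∈ {c : ℝ | ∃ l : S → S → ℝ, IsCoupling μ μ l ∧
        c = ∑ x, ∑ y, l x y * d x y} := by
      refine ⟨fun x y => if x = y then μ x else 0, ⟨?_, ?_, ?_⟩, ?_⟩
      · intro x y; dsimp only; split <;> simp [hμ0 x, le_refl]
      · intro x; simp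
      · intro y; rw [Finset.sum_ite_eq' Finset.univ y (fun x => μ x)]; simp
      · rw [eq_comm]
        refine Finset.sum_eq_zero fun x _ => Finset.sum_eq_zero fun y _ => ?_
        by_cases h : x = y
        · subst h; simp [hd0 x]
        · simp [h]
    exact csInf_le ⟨-M, hbb⟩ hmem
  · refine le_csInf hne ?_
    rintro r ⟨l, hl, rfl⟩
    exact Finset.sum_nonneg fun x _ => Finset.sum_nonneg fun y _ =>
      mul_nonneg (hl.1 x y) (hdnn x y)

lemma w1set_subset_symm (d : S → S → ℝ) (hsym : ∀ x y, d x y = d y x) (μ ν : S → ℝ) :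
    {c : ℝ | ∃ l : S → S → ℝ, IsCoupling μ ν l ∧ c = ∑ x, ∑ y, l x y * d x y} ⊆
    {c : ℝ | ∃ l : S → S → ℝ, IsCoupling ν μ l ∧ c = ∑ x, ∑ y, l x y * d x y} := by
  rintro r ⟨l, ⟨h0, h1, h2⟩, rfl⟩
  refine ⟨fun x y => l y x, ⟨fun x y => h0 y x, h2, h1⟩, ?_⟩
  rw [Finset.sum_comm]
  exact Finset.sum_congr rfl fun x _ => Finset.sum_congr rfl fun y _ => by rw [hsym x y]

lemma w1_symm (d : S → S → ℝ) (hsym : ∀ x y, d x y = d y x) (μ ν : S → ℝ) :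
    W1 d μ ν = W1 d ν μ := by
  unfold W1
  rw [Set.Subset.antisymm (w1set_subset_symm d hsym μ ν) (w1set_subset_symm d hsym ν μ)]

lemma w1_triangle (d : S → S → ℝ) (htri : ∀ x y z, d x z ≤ d x y + d y z)
    {μ ν ρ : S → ℝ}
    (hμ0 : ∀ x, 0 ≤ μ x) (hμ1 : ∑ x, μ x = 1)
    (hν0 : ∀ x, 0 ≤ ν x) (hν1 : ∑ x, ν x = 1)
    (hρ0 : ∀ x, 0 ≤ ρ x) (hρ1 : ∑ x, ρ x = 1) :
    W1 d μ ρ ≤ W1 d μ ν + W1 d ν ρ := by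
  classical
  obtain ⟨M, hM⟩ := exists_abs_bound d
  have hbbμρ := w1set_bddBelow d hM hμ1 (ν := ρ)
  have hneμν := w1set_nonempty d hμ0 hμ1 hν0 hν1
  have hneνρ := w1set_nonempty d hν0 hν1 hρ0 hρ1
  -- key step: for any couplings l1 of (μ,ν) and l2 of (ν,ρ), compose them
  have key : ∀ c1 ∈ {c : ℝ | ∃ l : S → S → ℝ, IsCoupling μ ν l ∧ c = ∑ x, ∑ y, l x y * d x y},
      ∀ c2 ∈ {c : ℝ | ∃ l : S → S → ℝ, IsCoupling ν ρ l ∧ c = ∑ x, ∑ y, l x y * d x y},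
      W1 d μ ρ ≤ c1 + c2 := by
    rintro c1 ⟨l1, ⟨h10, h11, h12⟩, rfl⟩ c2 ⟨l2, ⟨h20, h21, h22⟩, rfl⟩
    set t : S → S → S → ℝ := fun x y z => if ν y = 0 then 0 else l1 x y * l2 y z / ν y with ht
    have htnn : ∀ x y z, 0 ≤ t x y z := by
      intro x y z
      rw [ht]; dsimp only
      split
      · exact le_refl 0
      · exact div_nonneg (mul_nonneg (h10 x y) (h20 y z)) (hν0 y)
    have h1zero : ∀ x y, ν y = 0 → l1 x y = 0 := by
      intro x y hy
      have hle : l1 x y ≤ ∑ x', l1 x' y :=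
        Finset.single_le_sum (fun x' _ => h10 x' y) (Finset.mem_univ x)
      rw [h12 y, hy] at hle
      exact le_antisymm hle (h10 x y)
    have h2zero : ∀ y z, ν y = 0 → l2 y z = 0 := by
      intro y z hy
      have hle : l2 y z ≤ ∑ z', l2 y z' :=
        Finset.single_le_sum (fun z' _ => h20 y z') (Finset.mem_univ z)
      rw [h21 y, hy] at hle
      exact le_antisymm hle (h20 y z)
    have hsumz : ∀ x y, ∑ z, t x y z = l1 x y := by
      intro x y
      by_cases hy : ν y = 0
      · simp [ht, hy, h1zero x y hy]
      · simp only [ht, if_neg hy]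
        rw [← Finset.sum_div, ← Finset.mul_sum, h21 y, mul_div_assoc, div_self hy, mul_one]
    have hsumx : ∀ y z, ∑ x, t x y z = l2 y z := by
      intro y z
      by_cases hy : ν y = 0
      · simp [ht, hy, h2zero y z hy]
      · simp only [ht, if_neg hy]
        rw [← Finset.sum_div, ← Finset.sum_mul, h12 y]
        rw [mul_comm, mul_div_assoc, div_self hy, mul_one]
    set l : S → S → ℝ := fun x z => ∑ y, t x y z with hldef
    have hcoup : IsCoupling μ ρ l := by
      refine ⟨fun x z => Finset.sum_nonneg fun y _ => htnn x y z, ?_, ?_⟩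
      · intro x
        rw [hldef]; dsimp only
        rw [Finset.sum_comm]
        calc ∑ y, ∑ z, t x y z = ∑ y, l1 x y := Finset.sum_congr rfl fun y _ => hsumz x y
          _ = μ x := h11 x
      · intro z
        rw [hldef]; dsimp only
        rw [Finset.sum_comm]
        calc ∑ y, ∑ x, t x y z = ∑ y, l2 y z := Finset.sum_congr rfl fun y _ => hsumx y z
          _ = ρ z := h22 z
    have hmem : (∑ x, ∑ z, l x z * d x z) ∈
        {c : ℝ | ∃ l : S → S → ℝ, IsCoupling μ ρ l ∧ c = ∑ x, ∑ y, l x y * d x y} :=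
      ⟨l, hcoup, rfl⟩
    have hW : W1 d μ ρ ≤ ∑ x, ∑ z, l x z * d x z := csInf_le ⟨-M, hbbμρ⟩ hmem
    have hcost : ∑ x, ∑ z, l x z * d x z ≤
        (∑ x, ∑ y, l1 x y * d x y) + (∑ x, ∑ y, l2 x y * d x y) := by
      have step1 : ∑ x, ∑ z, l x z * d x z ≤
          ∑ x, ∑ z, ∑ y, t x y z * (d x y + d y z) := by
        refine Finset.sum_le_sum fun x _ => Finset.sum_le_sum fun z _ => ?_
        rw [hldef]; dsimp only
        rw [Finset.sum_mul]
        exact Finset.sum_le_sum fun y _ =>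
          mul_le_mul_of_nonneg_left (htri x y z) (htnn x y z)
      have split : ∑ x, ∑ z, ∑ y, t x y z * (d x y + d y z) =
          (∑ x, ∑ z, ∑ y, t x y z * d x y) + (∑ x, ∑ z, ∑ y, t x y z * d y z) := by
        simp [mul_add, Finset.sum_add_distrib]
      have hA : (∑ x, ∑ z, ∑ y, t x y z * d x y) = ∑ x, ∑ y, l1 x y * d x y := by
        refine Finset.sum_congr rfl fun x _ => ?_
        rw [Finset.sum_comm]
        refine Finset.sum_congr rfl fun y _ => ?_
        rw [← Finset.sum_mul, hsumz x y]
      have hB : (∑ x, ∑ z, ∑ y, t x y z * d y z) = ∑ y, ∑ z, l2 y z * d y z := by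
        calc ∑ x, ∑ z, ∑ y, t x y z * d y z
            = ∑ z, ∑ x, ∑ y, t x y z * d y z := Finset.sum_comm
          _ = ∑ z, ∑ y, ∑ x, t x y z * d y z :=
              Finset.sum_congr rfl fun z _ => Finset.sum_comm
          _ = ∑ z, ∑ y, l2 y z * d y z := by
              refine Finset.sum_congr rfl fun z _ => Finset.sum_congr rfl fun y _ => ?_
              rw [← Finset.sum_mul, hsumx y z]
          _ = ∑ y, ∑ z, l2 y z * d y z := Finset.sum_comm
      rw [split, hA, hB] at step1
      exact step1
    linarith
  -- now take infima
  have step2 : ∀ c2 ∈ {c : ℝ | ∃ l : S → S → ℝ, IsCoupling ν ρ l ∧ c = ∑ x, ∑ y, l x y * d x y},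
      W1 d μ ρ - c2 ≤ W1 d μ ν := by
    intro c2 hc2
    refine le_csInf hneμν fun c1 hc1 => ?_
    linarith [key c1 hc1 c2 hc2]
  have step3 : W1 d μ ρ - W1 d μ ν ≤ W1 d ν ρ := by
    refine le_csInf hneνρ fun c2 hc2 => ?_
    linarith [step2 c2 hc2]
  linarith

end Helpers

section Op
variable {S A : Type*} [Fintype S] [Fintype A]
  {π : S → A → ℝ} {R : S → A → ℝ} {P : S → A → S → ℝ}

lemma ppi_nonneg (hπ0 : ∀ s a, 0 ≤ π s a) (hP0 : ∀ s a s', 0 ≤ P s a s') (s s' : S) :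
    0 ≤ Ppi π P s s' :=
  Finset.sum_nonneg fun a _ => mul_nonneg (hπ0 s a) (hP0 s a s')

lemma ppi_sum_one (hπ1 : ∀ s, ∑ a, π s a = 1) (hP1 : ∀ s a, ∑ s', P s a s' = 1) (s : S) :
    ∑ s', Ppi π P s s' = 1 := by
  unfold Ppi
  rw [Finset.sum_comm]
  calc ∑ a, ∑ s', π s a * P s a s' = ∑ a, π s a := by
        refine Finset.sum_congr rfl fun a _ => ?_
        rw [← Finset.mul_sum, hP1 s a, mul_one]
    _ = 1 := hπ1 s

lemma IsPseudometric.nonneg {d : S → S → ℝ} (hd : IsPseudometric d) (x y : S) :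
    0 ≤ d x y := by
  have h := hd.2.2 x y x
  rw [hd.1 x, hd.2.1 y x] at h
  linarith

lemma bisimOp_pseudo (hπ0 : ∀ s a, 0 ≤ π s a) (hπ1 : ∀ s, ∑ a, π s a = 1)
    (hP0 : ∀ s a s', 0 ≤ P s a s') (hP1 : ∀ s a, ∑ s', P s a s' = 1)
    {c : ℝ} (hc0 : 0 < c) (hc1 : c < 1) {d : S → S → ℝ} (hd : IsPseudometric d) :
    IsPseudometric (bisimOp π R P c d) := by
  have hp0 := ppi_nonneg hπ0 hP0
  have hp1 := ppi_sum_one hπ1 hP1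
  refine ⟨?_, ?_, ?_⟩
  · intro x
    unfold bisimOp
    rw [sub_self, abs_zero, mul_zero, zero_add,
      w1_self d hd.1 hd.nonneg (hp0 x) (hp1 x), mul_zero]
  · intro x y
    unfold bisimOp
    rw [abs_sub_comm, w1_symm d hd.2.1 (Ppi π P x) (Ppi π P y)]
  · intro x y z
    unfold bisimOp
    have h1 : |Rpi π R x - Rpi π R z| ≤ |Rpi π R x - Rpi π R y| + |Rpi π R y - Rpi π R z| :=
      abs_sub_le _ _ _
    have h2 : W1 d (Ppi π P x) (Ppi π P z) ≤
        W1 d (Ppi π P x) (Ppi π P y) + W1 d (Ppi π P y) (Ppi π P z) :=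
      w1_triangle d hd.2.2 (hp0 x) (hp1 x) (hp0 y) (hp1 y) (hp0 z) (hp1 z)
    nlinarith [mul_le_mul_of_nonneg_left h1 (by linarith : (0:ℝ) ≤ 1 - c),
      mul_le_mul_of_nonneg_left h2 hc0.le]

lemma bisimOp_lip (hπ0 : ∀ s a, 0 ≤ π s a) (hπ1 : ∀ s, ∑ a, π s a = 1)
    (hP0 : ∀ s a s', 0 ≤ P s a s') (hP1 : ∀ s a, ∑ s', P s a s' = 1)
    {c : ℝ} (hc0 : 0 < c) {d d' : S → S → ℝ} {K : ℝ} (hK0 : 0 ≤ K)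
    (hK : ∀ x y, |d x y - d' x y| ≤ K) (si sj : S) :
    |bisimOp π R P c d si sj - bisimOp π R P c d' si sj| ≤ c * K := by
  have hp0 := ppi_nonneg hπ0 hP0
  have hp1 := ppi_sum_one hπ1 hP1
  have h1 : W1 d' (Ppi π P si) (Ppi π P sj) ≤ W1 d (Ppi π P si) (Ppi π P sj) + K :=
    w1_le_add d d' (hp0 si) (hp1 si) (hp0 sj) (hp1 sj)
      (fun x y => by have := abs_le.mp (hK x y); linarith [this.1])
  have h2 : W1 d (Ppi π P si) (Ppi π P sj) ≤ W1 d' (Ppi π P si) (Ppi π P sj) + K :=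
    w1_le_add d' d (hp0 si) (hp1 si) (hp0 sj) (hp1 sj)
      (fun x y => by have := abs_le.mp (hK x y); linarith [this.2])
  have heq : bisimOp π R P c d si sj - bisimOp π R P c d' si sj =
      c * (W1 d (Ppi π P si) (Ppi π P sj) - W1 d' (Ppi π P si) (Ppi π P sj)) := by
    unfold bisimOp; ring
  rw [heq, abs_mul, abs_of_pos hc0]
  exact mul_le_mul_of_nonneg_left (abs_le.mpr ⟨by linarith, by linarith⟩) hc0.le

end Op

set_option maxHeartbeats 1000000 in
lemma closed_pseudo (S : Type*) [Fintype S] :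
    IsClosed {f : S × S → ℝ | IsPseudometric fun a b => f (a, b)} := by
  have hset : {f : S × S → ℝ | IsPseudometric fun a b => f (a, b)} =
      (⋂ x, {f : S × S → ℝ | f (x, x) = 0}) ∩
      ((⋂ x, ⋂ y, {f : S × S → ℝ | f (x, y) = f (y, x)}) ∩
       (⋂ x, ⋂ y, ⋂ z, {f : S × S → ℝ | f (x, z) ≤ f (x, y) + f (y, z)})) := by
    ext f
    simp only [Set.mem_setOf_eq, Set.mem_inter_iff, Set.mem_iInter, IsPseudometric]
  rw [hset]
  refine (isClosed_iInter fun x => isClosed_eq (continuous_apply (x, x)) continuous_const).inter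
    ((isClosed_iInter fun x => isClosed_iInter fun y =>
      isClosed_eq (continuous_apply (x, y)) (continuous_apply (y, x))).inter
     (isClosed_iInter fun x => isClosed_iInter fun y => isClosed_iInter fun z =>
      isClosed_le (continuous_apply (x, z))
        ((continuous_apply (x, y)).add (continuous_apply (y, z)))))
/-- On a finite nonempty state space, the bisimulation operator `F` is a
contraction with Lipschitz constant `c` with respect to the sup-norm on
(bounded) pseudometrics, and hence it has a unique fixed point. -/
theorem bisimOp_contraction_unique_fixed_point {S A : Type*}
    [Fintype S] [Nonempty S] [Fintype A]
    (P : S → A → S → ℝ) (R : S → A → ℝ) (π : S → A → ℝ)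
    (hπ0 : ∀ s a, 0 ≤ π s a) (hπ1 : ∀ s, ∑ a, π s a = 1)
    (hP0 : ∀ s a s', 0 ≤ P s a s') (hP1 : ∀ s a, ∑ s', P s a s' = 1)
    (hRbd : ∃ C, ∀ s a, |R s a| ≤ C)
    (c : ℝ) (hc0 : 0 < c) (hc1 : c < 1) :
    (∀ d d' : S → S → ℝ, IsPseudometric d → IsPseudometric d' → ∀ si sj : S,
        |bisimOp π R P c d si sj - bisimOp π R P c d' si sj|
          ≤ c * ⨆ p : S × S, |d p.1 p.2 - d' p.1 p.2|) ∧
    (∃! d : S → S → ℝ, IsPseudometric d ∧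
        ∀ si sj : S, bisimOp π R P c d si sj = d si sj) := by
  constructor
  · intro d d' _ _ si sj
    set K : ℝ := ⨆ p : S × S, |d p.1 p.2 - d' p.1 p.2| with hKdef
    have hKb : ∀ x y, |d x y - d' x y| ≤ K := fun x y =>
      le_ciSup (f := fun p : S × S => |d p.1 p.2 - d' p.1 p.2|)
        (Set.Finite.bddAbove (Set.finite_range _)) ((x, y) : S × S)
    have hK0 : 0 ≤ K := by
      obtain ⟨s⟩ := ‹Nonempty S›
      exact (abs_nonneg _).trans (hKb s s)
    exact bisimOp_lip hπ0 hπ1 hP0 hP1 hc0 hK0 hKb si sj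
  · -- Banach fixed point on S × S → ℝ with the sup metric
    set G : (S × S → ℝ) → (S × S → ℝ) :=
      fun f p => bisimOp π R P c (fun a b => f (a, b)) p.1 p.2 with hGdef
    set Kc : NNReal := ⟨c, hc0.le⟩ with hKc
    have hGlip : LipschitzWith Kc G := by
      refine LipschitzWith.of_dist_le_mul fun f g => ?_
      have hcoe : (Kc : ℝ) = c := rfl
      rw [hcoe, dist_pi_le_iff (mul_nonneg hc0.le dist_nonneg)]
      intro p
      rw [Real.dist_eq]
      exact bisimOp_lip hπ0 hπ1 hP0 hP1 hc0 dist_nonneg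
        (fun x y => by rw [← Real.dist_eq]; exact dist_le_pi_dist f g ((x, y) : S × S))
        p.1 p.2
    have hG : ContractingWith Kc G := ⟨by exact_mod_cast hc1, hGlip⟩
    set dstar : S × S → ℝ := ContractingWith.fixedPoint G hG with hdstar
    have hfix : G dstar = dstar := hG.fixedPoint_isFixedPt
    -- the set of (uncurried) pseudometrics is closed and invariant
    have hclosed := closed_pseudo S
    have hinv : ∀ f : S × S → ℝ, IsPseudometric (fun a b => f (a, b)) →
        IsPseudometric (fun a b => G f (a, b)) := by
      intro f hf
      exact bisimOp_pseudo hπ0 hπ1 hP0 hP1 hc0 hc1 hf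
    have hzero : IsPseudometric (fun a b : S => (0 : S × S → ℝ) (a, b)) := by
      refine ⟨fun x => rfl, fun x y => rfl, fun x y z => by simp⟩
    have hiter : ∀ n : ℕ, (G^[n] 0) ∈ {f : S × S → ℝ | IsPseudometric fun a b => f (a, b)} := by
      intro n
      induction n with
      | zero => exact hzero
      | succ n ih =>
        rw [Function.iterate_succ_apply']
        exact hinv _ ih
    have hmem : dstar ∈ {f : S × S → ℝ | IsPseudometric fun a b => f (a, b)} :=
      hclosed.mem_of_tendsto (hG.tendsto_iterate_fixedPoint 0)
        (Filter.Eventually.of_forall hiter)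
    refine ⟨fun a b => dstar (a, b), ⟨hmem, ?_⟩, ?_⟩
    · intro si sj
      exact congrFun hfix (si, sj)
    · rintro d' ⟨hd'1, hd'2⟩
      have hfp : Function.IsFixedPt G (fun p : S × S => d' p.1 p.2) := by
        funext p
        exact hd'2 p.1 p.2
      have := hG.fixedPoint_unique hfp
      funext a b
      exact congrFun this (a, b)
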